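/- If T is an A-bounded operator with AT² = 0, then ω_A(T) = (1/2)‖T‖_A. -/

import Mathlib

open Filter

variable {H : Type*} [NormedAddCommGroup H] [InnerProductSpace ℂ H] [CompleteSpace H]

/-- The seminorm induced by a positive operator `A`: `‖x‖_A = ⟨Ax,x⟩^{1/2}`. -/
noncomputable def anorm (A : H →L[ℂ] H) (x : H) : ℝ :=
  Real.sqrt ((inner ℂ (A x) x : ℂ).re)

/-- `T` is `A`-bounded: there is `c > 0` with `‖Tx‖_A ≤ c‖x‖_A` for all `x`. -/
def ABounded (A T : H →L[ℂ] H) : Prop :=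
  ∃ c > 0, ∀ x : H, anorm A (T x) ≤ c * anorm A x

/-- The `A`-operator seminorm `‖T‖_A = sup{‖Tx‖_A : ‖x‖_A = 1}`. -/
noncomputable def opAnorm (A T : H →L[ℂ] H) : ℝ :=
  sSup {c : ℝ | ∃ x : H, anorm A x = 1 ∧ c = anorm A (T x)}

/-- The `A`-spectral radius `r_A(T) = inf_{n ≥ 1} ‖Tⁿ‖_A^{1/n}`. -/
noncomputable def rA (A T : H →L[ℂ] H) : ℝ :=
  ⨅ n : ℕ+, opAnorm A (T ^ (n : ℕ)) ^ (((n : ℕ) : ℝ)⁻¹)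

/-- The `A`-numerical radius `ω_A(T) = sup{|⟨Tx,x⟩_A| : ‖x‖_A = 1}`. -/
noncomputable def wA (A T : H →L[ℂ] H) : ℝ :=
  sSup {c : ℝ | ∃ x : H, anorm A x = 1 ∧ c = ‖(inner ℂ (A (T x)) x : ℂ)‖}

set_option linter.unusedSectionVars false

section aux
variable (A T : H →L[ℂ] H)

lemma aux_re_nonneg (hA : A.IsPositive) (x : H) : 0 ≤ (inner ℂ (A x) x : ℂ).re := by
  have := hA.2 x
  simpa [ContinuousLinearMap.reApplyInnerSelf] using this

lemma aux_symm (hA : A.IsPositive) (x y : H) :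
    (inner ℂ (A y) x : ℂ) = (starRingEnd ℂ) (inner ℂ (A x) y : ℂ) := by
  have h1 : (inner ℂ x (A y) : ℂ) = inner ℂ (A x) y := by
    have h := (ContinuousLinearMap.adjoint_inner_left A y x).symm
    rwa [hA.isSelfAdjoint.adjoint_eq] at h
  rw [← inner_conj_symm, h1]

lemma aux_expand (hA : A.IsPositive) (u v : H) (μ : ℂ) :
    (inner ℂ (A (u + μ • v)) (u + μ • v) : ℂ)
      = inner ℂ (A u) u + μ * inner ℂ (A u) v
        + (starRingEnd ℂ) (μ * inner ℂ (A u) v) + (Complex.normSq μ : ℂ) * inner ℂ (A v) v := by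
  rw [map_add, map_smul, inner_add_left, inner_add_right, inner_add_right,
    inner_smul_left, inner_smul_right, inner_smul_right, inner_smul_left,
    aux_symm A hA v u, map_mul, ← Complex.mul_conj]
  simp only [Complex.conj_conj]
  ring

lemma aux_cs (hA : A.IsPositive) (u v : H) :
    ‖(inner ℂ (A u) v : ℂ)‖ ^ 2 ≤ (inner ℂ (A u) u : ℂ).re * (inner ℂ (A v) v : ℂ).re := by
  set a := (inner ℂ (A u) u : ℂ).re with ha_def
  set b := (inner ℂ (A v) v : ℂ).re with hb_def
  set c := (inner ℂ (A u) v : ℂ) with hc_def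
  have ha : 0 ≤ a := aux_re_nonneg A hA u
  have hb : 0 ≤ b := aux_re_nonneg A hA v
  have key : ∀ t : ℝ, 0 ≤ a + 2 * t * ‖c‖ ^ 2 + t ^ 2 * ‖c‖ ^ 2 * b := by
    intro t
    have h0 := aux_re_nonneg A hA (u + ((t : ℂ) * (starRingEnd ℂ) c) • v)
    rw [aux_expand A hA u v _] at h0
    have e1 : ((t : ℂ) * (starRingEnd ℂ) c) * c = ((t * ‖c‖ ^ 2 : ℝ) : ℂ) := by
      rw [mul_assoc, Complex.conj_mul']
      push_cast
      ring
    rw [← hc_def, e1] at h0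
    have e2 : Complex.normSq ((t : ℂ) * (starRingEnd ℂ) c) = t ^ 2 * ‖c‖ ^ 2 := by
      rw [Complex.normSq_mul, Complex.normSq_conj, Complex.normSq_ofReal, ← Complex.sq_norm]
      ring
    rw [e2] at h0
    simp only [Complex.add_re, Complex.ofReal_re, Complex.conj_re, Complex.re_ofReal_mul] at h0
    rw [← ha_def, ← hb_def] at h0
    linarith
  by_cases hc : ‖c‖ = 0
  · rw [hc]
    simpa using mul_nonneg ha hb
  · have hc2 : 0 < ‖c‖ ^ 2 := by positivity
    have hd : discrim (‖c‖ ^ 2 * b) (2 * ‖c‖ ^ 2) a ≤ 0 := by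
      apply discrim_le_zero
      intro x
      have h := key x
      nlinarith [h]
    rw [discrim] at hd
    nlinarith [hd, hc2]

lemma anorm_sq (hA : A.IsPositive) (x : H) : anorm A x ^ 2 = (inner ℂ (A x) x : ℂ).re :=
  Real.sq_sqrt (aux_re_nonneg A hA x)

lemma anorm_smul (a : ℂ) (x : H) :
    anorm A (a • x) = ‖a‖ * anorm A x := by
  unfold anorm
  rw [map_smul, inner_smul_left, inner_smul_right, ← mul_assoc]
  have h1 : (starRingEnd ℂ) a * a = (Complex.normSq a : ℂ) := by
    rw [mul_comm, Complex.mul_conj]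
  rw [h1, Complex.re_ofReal_mul, Real.sqrt_mul (Complex.normSq_nonneg a), Complex.norm_def]

lemma anorm_nonneg' (x : H) : 0 ≤ anorm A x := Real.sqrt_nonneg _

lemma anorm_eq_zero_iff (hA : A.IsPositive) (x : H) :
    anorm A x = 0 ↔ (inner ℂ (A x) x : ℂ).re = 0 := by
  unfold anorm
  rw [Real.sqrt_eq_zero (aux_re_nonneg A hA x)]

lemma aux_T2_left (h2 : A ∘L (T ^ 2) = 0) (x w : H) : (inner ℂ (A (T (T x))) w : ℂ) = 0 := by
  have h : A (T (T x)) = 0 := by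
    have h1 := congrArg (fun S : H →L[ℂ] H => S x) h2
    simpa [ContinuousLinearMap.comp_apply, sq, ContinuousLinearMap.mul_apply] using h1
  simp [h]

lemma aux_T2_right (hA : A.IsPositive) (h2 : A ∘L (T ^ 2) = 0) (x w : H) :
    (inner ℂ (A w) (T (T x)) : ℂ) = 0 := by
  rw [aux_symm A hA, aux_T2_left A T h2, map_zero]

lemma exists_unit (hA : A.IsPositive) (hA0 : A ≠ 0) : ∃ e : H, anorm A e = 1 := by
  have hex : ∃ x : H, (inner ℂ (A x) x : ℂ).re ≠ 0 := by
    by_contra hno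
    push_neg at hno
    apply hA0
    have hzero : ∀ x : H, (inner ℂ (A x) x : ℂ) = 0 := by
      intro x
      have him : (inner ℂ (A x) x : ℂ).im = 0 := by
        have := aux_symm A hA x x
        have h2 := Complex.conj_eq_iff_im.mp this.symm
        exact h2
      exact Complex.ext (hno x) him
    have := (inner_map_self_eq_zero (A : H →ₗ[ℂ] H)).mp (fun x => hzero x)
    ext x
    have := congrArg (fun S : H →ₗ[ℂ] H => S x) this
    simpa using this
  obtain ⟨x, hx⟩ := hex
  have hpos : 0 < anorm A x := by
    rcases (anorm_nonneg' A x).lt_or_eq with h | h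
    · exact h
    · exact absurd ((anorm_eq_zero_iff A hA x).mp h.symm) hx
  refine ⟨(((anorm A x)⁻¹ : ℝ) : ℂ) • x, ?_⟩
  rw [anorm_smul A, Complex.norm_real, Real.norm_eq_abs, abs_of_pos (inv_pos.mpr hpos),
    inv_mul_cancel₀ (ne_of_gt hpos)]

lemma opA_bddAbove (hT : ABounded A T) :
    BddAbove {c : ℝ | ∃ x : H, anorm A x = 1 ∧ c = anorm A (T x)} := by
  obtain ⟨c, _, hc⟩ := hT
  refine ⟨c, fun r hr => ?_⟩
  obtain ⟨x, hx1, rfl⟩ := hr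
  simpa [hx1] using hc x

lemma le_opA (hT : ABounded A T) {x : H} (hx : anorm A x = 1) :
    anorm A (T x) ≤ opAnorm A T :=
  le_csSup (opA_bddAbove A T hT) ⟨x, hx, rfl⟩

lemma opA_nonneg (hA : A.IsPositive) (hA0 : A ≠ 0) (hT : ABounded A T) :
    0 ≤ opAnorm A T := by
  obtain ⟨e, he⟩ := exists_unit A hA hA0
  exact le_trans (anorm_nonneg' A (T e)) (le_opA A T hT he)

lemma opA_bound (hA : A.IsPositive) (hT : ABounded A T) (z : H) :
    anorm A (T z) ≤ opAnorm A T * anorm A z := by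
  by_cases hz : anorm A z = 0
  · obtain ⟨c, _, hc⟩ := hT
    have h1 : anorm A (T z) ≤ 0 := by simpa [hz] using hc z
    have h2 : anorm A (T z) = 0 := le_antisymm h1 (anorm_nonneg' A _)
    simp [h2, hz]
  · have hpos : 0 < anorm A z := (anorm_nonneg' A z).lt_of_ne (Ne.symm hz)
    set r : ℝ := (anorm A z)⁻¹ with hr
    have he : anorm A ((r : ℂ) • z) = 1 := by
      rw [anorm_smul A, Complex.norm_real, Real.norm_eq_abs, abs_of_pos (inv_pos.mpr hpos),
        inv_mul_cancel₀ (ne_of_gt hpos)]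
    have h1 := le_opA A T hT he
    rw [map_smul, anorm_smul A, Complex.norm_real, Real.norm_eq_abs, abs_of_pos (inv_pos.mpr hpos)] at h1
    rw [inv_mul_le_iff₀ hpos] at h1
    linarith [h1]

lemma wA_bddAbove (hA : A.IsPositive) (hT : ABounded A T) :
    BddAbove {c : ℝ | ∃ x : H, anorm A x = 1 ∧ c = ‖(inner ℂ (A (T x)) x : ℂ)‖} := by
  obtain ⟨c, hcpos, hc⟩ := hT
  refine ⟨c, fun r hr => ?_⟩
  obtain ⟨x, hx1, rfl⟩ := hr
  have hcs := aux_cs A hA (T x) x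
  have h1 : (inner ℂ (A x) x : ℂ).re = 1 := by
    have := anorm_sq A hA x
    rw [hx1] at this; simpa using this.symm
  have h2 : (inner ℂ (A (T x)) (T x) : ℂ).re = anorm A (T x) ^ 2 := (anorm_sq A hA (T x)).symm
  have h3 : anorm A (T x) ≤ c := by simpa [hx1] using hc x
  have h4 : ‖(inner ℂ (A (T x)) x : ℂ)‖ ^ 2 ≤ c ^ 2 := by
    rw [h1, h2] at hcs
    nlinarith [anorm_nonneg' A (T x)]
  nlinarith [norm_nonneg (inner ℂ (A (T x)) x : ℂ), hcpos]

lemma le_wA (hA : A.IsPositive) (hT : ABounded A T) {x : H} (hx : anorm A x = 1) :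
    ‖(inner ℂ (A (T x)) x : ℂ)‖ ≤ wA A T :=
  le_csSup (wA_bddAbove A T hA hT) ⟨x, hx, rfl⟩

lemma wA_bound (hA : A.IsPositive) (hT : ABounded A T) (z : H) :
    ‖(inner ℂ (A (T z)) z : ℂ)‖ ≤ wA A T * anorm A z ^ 2 := by
  by_cases hz : anorm A z = 0
  · have hre : (inner ℂ (A z) z : ℂ).re = 0 := (anorm_eq_zero_iff A hA z).mp hz
    have hcs := aux_cs A hA (T z) z
    rw [hre, mul_zero] at hcs
    have : ‖(inner ℂ (A (T z)) z : ℂ)‖ = 0 := by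
      nlinarith [norm_nonneg (inner ℂ (A (T z)) z : ℂ)]
    simp [this, hz]
  · have hpos : 0 < anorm A z := (anorm_nonneg' A z).lt_of_ne (Ne.symm hz)
    set r : ℝ := (anorm A z)⁻¹ with hr
    have he : anorm A ((r : ℂ) • z) = 1 := by
      rw [anorm_smul A, Complex.norm_real, Real.norm_eq_abs, abs_of_pos (inv_pos.mpr hpos),
        inv_mul_cancel₀ (ne_of_gt hpos)]
    have h1 := le_wA A T hA hT he
    rw [map_smul, map_smul, inner_smul_left, inner_smul_right] at h1
    rw [norm_mul, norm_mul, Complex.norm_conj, Complex.norm_real, Real.norm_eq_abs,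
      abs_of_pos (inv_pos.mpr hpos)] at h1
    have h2 : ‖(inner ℂ (A (T z)) z : ℂ)‖
        = anorm A z ^ 2 * (r * (r * ‖(inner ℂ (A (T z)) z : ℂ)‖)) := by
      rw [hr]
      field_simp
    have h3 := mul_le_mul_of_nonneg_left h1 (sq_nonneg (anorm A z))
    rw [← h2] at h3
    linarith
end aux

lemma aux_self_real (A : H →L[ℂ] H) (hA : A.IsPositive) (x : H) :
    (inner ℂ (A x) x : ℂ) = (((inner ℂ (A x) x : ℂ).re : ℝ) : ℂ) := by
  have h := aux_symm A hA x x
  have him := Complex.conj_eq_iff_im.mp h.symm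
  exact Complex.ext (by simp) (by simp [him])

theorem stmt_15 (A T : H →L[ℂ] H) (hA : A.IsPositive) (hA0 : A ≠ 0)
    (hT : ABounded A T) (h2 : A ∘L (T ^ 2) = 0) :
    wA A T = (1 / 2) * opAnorm A T := by
  obtain ⟨e, he⟩ := exists_unit A hA hA0
  have hN0 : 0 ≤ opAnorm A T := opA_nonneg A T hA hA0 hT
  have hW0 : 0 ≤ wA A T :=
    le_trans (norm_nonneg _) (le_wA A T hA hT he)
  set N := opAnorm A T with hN
  set W := wA A T with hW
  -- key computations for z = x + μ • T x, x a unit vector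
  have hup : W ≤ (1 / 2) * N := by
    refine csSup_le ⟨_, ⟨e, he, rfl⟩⟩ ?_
    rintro r ⟨x, hx1, rfl⟩
    set s : ℂ := inner ℂ (A (T x)) x with hs
    set mre : ℝ := (inner ℂ (A (T x)) (T x) : ℂ).re with hmre
    have hm0 : 0 ≤ mre := aux_re_nonneg A hA (T x)
    have hxx : (inner ℂ (A x) x : ℂ).re = 1 := by
      have h := anorm_sq A hA x
      rw [hx1] at h
      simpa using h.symm
    have hcs : ‖s‖ ^ 2 ≤ mre := by
      have h := aux_cs A hA (T x) x
      rw [hxx, mul_one] at h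
      exact h
    have hmN : mre ≤ N ^ 2 := by
      have h := le_opA A T hT hx1
      have h' := pow_le_pow_left₀ (anorm_nonneg' A (T x)) h 2
      rwa [anorm_sq A hA (T x)] at h'
    by_cases hmz : mre = 0
    · have hz : ‖s‖ = 0 := by
        nlinarith [norm_nonneg s]
      rw [hz]
      positivity
    · have hmpos : 0 < mre := hm0.lt_of_ne (Ne.symm hmz)
      set k : ℝ := Complex.normSq s with hk
      set μ : ℂ := -(s / (mre : ℂ)) with hμ
      set z : H := x + μ • T x with hz
      have hxTx : (inner ℂ (A x) (T x) : ℂ) = (starRingEnd ℂ) s := aux_symm A hA (T x) x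
      -- ‖z‖_A² = 1 - k/mre
      have hz2 : anorm A z ^ 2 = 1 - k / mre := by
        rw [anorm_sq A hA, hz, aux_expand A hA x (T x) μ, hxTx]
        have e1 : μ * (starRingEnd ℂ) s = ((-(k / mre) : ℝ) : ℂ) := by
          rw [hμ, hk]
          field_simp
          rw [Complex.mul_conj]
          simp
        have e2 : Complex.normSq μ = k / mre ^ 2 := by
          rw [hμ, hk, Complex.normSq_neg, Complex.normSq_div, Complex.normSq_ofReal]
          ring
        rw [e1, e2]
        simp only [Complex.add_re, Complex.ofReal_re, Complex.conj_re, Complex.re_ofReal_mul,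
          hxx, ← hmre]
        field_simp
        ring
      -- ‖Tz‖_A² = mre
      have hTz2 : anorm A (T z) ^ 2 = mre := by
        have hTz : T z = T x + μ • T (T x) := by rw [hz, map_add, map_smul]
        rw [anorm_sq A hA, hTz, aux_expand A hA (T x) (T (T x)) μ,
          aux_T2_right A T hA h2, aux_T2_left A T h2]
        simp [← hmre]
      have hb := opA_bound A T hA hT z
      have hb2 := pow_le_pow_left₀ (anorm_nonneg' A (T z)) hb 2
      rw [mul_pow, hTz2, hz2] at hb2
      have e3 : (1 - k / mre) * mre = mre - k := by field_simp
      have h5 : mre ^ 2 ≤ N ^ 2 * mre - N ^ 2 * k := by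
        have h6 := mul_le_mul_of_nonneg_right hb2 hm0
        rw [mul_assoc, e3] at h6
        nlinarith [h6]
      have hNpos : 0 < N := by nlinarith
      have hk4 : k ≤ N ^ 2 / 4 := by
        nlinarith [sq_nonneg (mre - N ^ 2 / 2)]
      have habs : ‖s‖ = Real.sqrt k := by
        rw [hk, ← Complex.sq_norm, Real.sqrt_sq (norm_nonneg s)]
      rw [habs]
      calc Real.sqrt k ≤ Real.sqrt (N ^ 2 / 4) := Real.sqrt_le_sqrt hk4
        _ = 1 / 2 * N := by
            rw [show N ^ 2 / 4 = (1 / 2 * N) ^ 2 by ring,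
              Real.sqrt_sq (by positivity)]
  have hlow : N ≤ 2 * W := by
    refine csSup_le ⟨_, ⟨e, he, rfl⟩⟩ ?_
    rintro r ⟨x, hx1, rfl⟩
    set s : ℂ := inner ℂ (A (T x)) x with hs
    set β : ℝ := anorm A (T x) with hβ
    have hβ0 : 0 ≤ β := anorm_nonneg' A (T x)
    by_cases hbz : β = 0
    · rw [hbz]; linarith
    · have hβpos : 0 < β := hβ0.lt_of_ne (Ne.symm hbz)
      have hmc : (inner ℂ (A (T x)) (T x) : ℂ) = ((β ^ 2 : ℝ) : ℂ) := by
        rw [aux_self_real A hA (T x), ← anorm_sq A hA (T x)]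
      have hxTx : (inner ℂ (A x) (T x) : ℂ) = (starRingEnd ℂ) s := aux_symm A hA (T x) x
      have hxx : (inner ℂ (A x) x : ℂ).re = 1 := by
        have h := anorm_sq A hA x
        rw [hx1] at h
        simpa using h.symm
      have hkey : ∀ t : ℝ, ‖(s + ((t * β ^ 2 : ℝ) : ℂ))‖
          ≤ W * (1 + 2 * (t * s.re) + t ^ 2 * β ^ 2) := by
        intro t
        set μ : ℂ := ((t : ℝ) : ℂ) with hμ
        have h1 := wA_bound A T hA hT (x + μ • T x)
        have hc : (inner ℂ (A (T (x + μ • T x))) (x + μ • T x) : ℂ)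
            = s + ((t * β ^ 2 : ℝ) : ℂ) := by
          rw [map_add, map_smul, map_add, map_smul, inner_add_left, inner_smul_left,
            inner_add_right, inner_smul_right, inner_add_right, inner_smul_right,
            aux_T2_left A T h2 x x, aux_T2_left A T h2 x (T x), hmc, hμ]
          push_cast
          ring
        have hnz : anorm A (x + μ • T x) ^ 2 = 1 + 2 * (t * s.re) + t ^ 2 * β ^ 2 := by
          rw [anorm_sq A hA, aux_expand A hA x (T x) μ, hxTx, hmc, hμ]
          have e2 : Complex.normSq ((t : ℝ) : ℂ) = t ^ 2 := by
            rw [Complex.normSq_ofReal]; ring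
          rw [e2]
          simp only [Complex.add_re, Complex.conj_re, Complex.re_ofReal_mul, hxx,
            Complex.ofReal_re, Complex.mul_re, Complex.ofReal_im]
          push_cast
          ring
        rw [hc, hnz] at h1
        exact h1
      have hp := hkey (β⁻¹)
      have hm := hkey (-(β⁻¹))
      have e4 : (β⁻¹ * β ^ 2 : ℝ) = β := by field_simp
      have e5 : ((-(β⁻¹)) * β ^ 2 : ℝ) = -β := by field_simp
      rw [e4] at hp
      rw [e5] at hm
      have e6 : (β⁻¹) ^ 2 * β ^ 2 = 1 := by field_simp
      have e7 : (-(β⁻¹)) ^ 2 * β ^ 2 = 1 := by field_simp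
      rw [e6] at hp
      rw [e7] at hm
      have htri : 2 * β ≤ ‖(s + ((β : ℝ) : ℂ))‖ + ‖(s + ((-β : ℝ) : ℂ))‖ := by
        have h8 : ((2 * β : ℝ) : ℂ) = (s + ((β : ℝ) : ℂ)) - (s + ((-β : ℝ) : ℂ)) := by
          push_cast; ring
        calc 2 * β = ‖((2 * β : ℝ) : ℂ)‖ := by
              rw [Complex.norm_real, Real.norm_eq_abs, abs_of_nonneg (by linarith)]
          _ = ‖((s + ((β : ℝ) : ℂ)) - (s + ((-β : ℝ) : ℂ)))‖ := by rw [h8]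
          _ ≤ _ := by
                exact norm_sub_le _ _
      linarith [hp, hm, htri]
  linarith
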